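/- Let B = (X, Y) ∈ ℝ² be an anchor, P_f = (x_f, y_f) ∈ ℝ² a final point, and P = (x, y) ∈ ℝ² a measurement point with P ≠ B. Then the vector v = (−(y_f − Y), x_f − X, 1) ∈ ℝ³ satisfies ⟨γ(B, P, P_f), v⟩ = 0. Consequently, for any finite family of measurement points P k ≠ B all sensed by the same anchor B, the Gramian G = Σ_k γ(B, P k, P_f)·γ(B, P k, P_f)ᵀ is a singular 3×3 matrix (the nonzero vector v lies in its kernel). -/

import Mathlib

/-- The rank-one information vector of a single range measurement from anchor `B`
taken at point `P`, for final point `Pf` (plane identified with Euclidean `ℝ²`). -/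
noncomputable def gamma (B P Pf : EuclideanSpace ℝ (Fin 2)) : Fin 3 → ℝ :=
  ![(P 0 - B 0) / ‖P - B‖,
    (P 1 - B 1) / ‖P - B‖,
    ((Pf 0 - P 0) * (B 1 - P 1) - (Pf 1 - P 1) * (B 0 - P 0)) / ‖P - B‖]

/-- A single anchor always generates a singular Constructibility Gramian: the fixed
nonzero vector `v = (-(y_f - Y), x_f - X, 1)` is orthogonal to every information
vector of a measurement from anchor `B`, hence lies in the kernel of the Gramian. -/
theorem single_anchor_singular_gramian (B Pf : EuclideanSpace ℝ (Fin 2)) :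
    (∀ P : EuclideanSpace ℝ (Fin 2), P ≠ B →
      ∑ i : Fin 3, gamma B P Pf i * (![-(Pf 1 - B 1), Pf 0 - B 0, 1] : Fin 3 → ℝ) i = 0) ∧
    (∀ (N : ℕ) (P : Fin N → EuclideanSpace ℝ (Fin 2)), (∀ k, P k ≠ B) →
      (∑ k : Fin N, Matrix.vecMulVec (gamma B (P k) Pf) (gamma B (P k) Pf)).det = 0 ∧
      (∑ k : Fin N, Matrix.vecMulVec (gamma B (P k) Pf) (gamma B (P k) Pf)).mulVec
        (![-(Pf 1 - B 1), Pf 0 - B 0, 1] : Fin 3 → ℝ) = 0 ∧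
      (![-(Pf 1 - B 1), Pf 0 - B 0, 1] : Fin 3 → ℝ) ≠ 0) := by
  set v : Fin 3 → ℝ := ![-(Pf 1 - B 1), Pf 0 - B 0, 1] with hv
  have key : ∀ P : EuclideanSpace ℝ (Fin 2), ∑ i : Fin 3, gamma B P Pf i * v i = 0 := by
    intro P
    simp only [gamma, hv, Fin.sum_univ_three, Matrix.cons_val_zero, Matrix.cons_val_one,
      Matrix.head_cons, Matrix.cons_val_two, Matrix.tail_cons]
    rw [div_mul_eq_mul_div, div_mul_eq_mul_div, div_mul_eq_mul_div, ← add_div,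
      ← add_div]
    have h : (P 0 - B 0) * -(Pf 1 - B 1) + (P 1 - B 1) * (Pf 0 - B 0) +
        ((Pf 0 - P 0) * (B 1 - P 1) - (Pf 1 - P 1) * (B 0 - P 0)) * 1 = 0 := by ring
    rw [h, zero_div]
  have hvne : v ≠ 0 := by
    intro h
    have := congrFun h 2
    simp [hv] at this
  have hmv : ∀ P : EuclideanSpace ℝ (Fin 2),
      (Matrix.vecMulVec (gamma B P Pf) (gamma B P Pf)).mulVec v = 0 := by
    intro P
    funext i
    simp only [Matrix.mulVec, Matrix.vecMulVec_apply, dotProduct, Pi.zero_apply]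
    simp_rw [mul_assoc]
    rw [← Finset.mul_sum, key P, mul_zero]
  refine ⟨fun P _ => key P, fun N P hP => ?_⟩
  have hsum : (∑ k : Fin N, Matrix.vecMulVec (gamma B (P k) Pf) (gamma B (P k) Pf)).mulVec v = 0 := by
    funext i
    simp only [Matrix.mulVec, dotProduct, Matrix.sum_apply, Finset.sum_mul, Pi.zero_apply]
    rw [Finset.sum_comm]
    refine Finset.sum_eq_zero fun k _ => ?_
    have := congrFun (hmv (P k)) i
    simpa [Matrix.mulVec, dotProduct] using this
  exact ⟨(Matrix.exists_mulVec_eq_zero_iff).mp ⟨v, hvne, hsum⟩, hsum, hvne⟩
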